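/- Let 𝒜 be an abelian category, L a lattice, λ an additive function on 𝒜 with values in L, and E ⊆ L the additive submonoid generated by {λ(X) : X an object of 𝒜}. Then for every face τ of E: (1) the full subcategory S_τ = {X : λ(X) ∈ τ} is a Serre subcategory of 𝒜, i.e. closed under subobjects, quotient objects, and extensions; (2) the additive submonoid of L generated by {λ(X) : X ∈ S_τ} equals τ. In particular, distinct faces of E give distinct face subcategories. -/

import Mathlib

open CategoryTheory

/-- A face of a submonoid/cone `σ`: a nonempty subset `τ ⊆ σ` such that for
`a, b ∈ σ`, `a + b ∈ τ` if and only if `a ∈ τ` and `b ∈ τ`. -/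
def IsFace {L : Type*} [AddCommMonoid L] (σ τ : Set L) : Prop :=
  τ.Nonempty ∧ τ ⊆ σ ∧ ∀ a ∈ σ, ∀ b ∈ σ, (a + b ∈ τ ↔ a ∈ τ ∧ b ∈ τ)

/-- for every face `τ` of the effective cone `E`, the face
subcategory `S_τ = {X : λ(X) ∈ τ}` is a Serre subcategory whose effective
cone is `τ`; distinct faces give distinct face subcategories. -/
theorem stmt18
    {A : Type*} [Category A] [Abelian A]
    {L : Type*} [AddCommGroup L] [Module.Free ℤ L] [Module.Finite ℤ L]
    (lam : A → L)
    (hadd : ∀ S : ShortComplex A, S.ShortExact → lam S.X₂ = lam S.X₁ + lam S.X₃)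
    (E : Set L) (hE : E = (AddSubmonoid.closure (Set.range lam) : Set L)) :
    (∀ τ : Set L, IsFace E τ →
      -- (1) S_τ is a Serre subcategory: closed under subobjects,
      -- quotient objects and extensions
      (∀ (X Y : A) (f : X ⟶ Y), Mono f → lam Y ∈ τ → lam X ∈ τ) ∧
      (∀ (X Y : A) (f : X ⟶ Y), Epi f → lam X ∈ τ → lam Y ∈ τ) ∧
      (∀ S : ShortComplex A, S.ShortExact → lam S.X₁ ∈ τ → lam S.X₃ ∈ τ →
        lam S.X₂ ∈ τ) ∧
      -- (2) the effective cone of S_τ is τ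
      (AddSubmonoid.closure (lam '' {X : A | lam X ∈ τ}) : Set L) = τ) ∧
    -- distinct faces give distinct face subcategories
    (∀ τ τ' : Set L, IsFace E τ → IsFace E τ' →
      {X : A | lam X ∈ τ} = {X : A | lam X ∈ τ'} → τ = τ') := by
  have hmem : ∀ X : A, lam X ∈ E := by
    intro X; rw [hE]; exact AddSubmonoid.subset_closure ⟨X, rfl⟩
  have hEadd : ∀ a ∈ E, ∀ b ∈ E, a + b ∈ E := by
    intro a ha b hb; rw [hE] at *; exact add_mem ha hb
  have hE0 : (0 : L) ∈ E := by rw [hE]; exact zero_mem _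
  -- basic facts about faces
  have key : ∀ τ : Set L, IsFace E τ →
      (∀ (X Y : A) (f : X ⟶ Y), Mono f → lam Y ∈ τ → lam X ∈ τ) ∧
      (∀ (X Y : A) (f : X ⟶ Y), Epi f → lam X ∈ τ → lam Y ∈ τ) ∧
      (∀ S : ShortComplex A, S.ShortExact → lam S.X₁ ∈ τ → lam S.X₃ ∈ τ →
        lam S.X₂ ∈ τ) ∧
      (AddSubmonoid.closure (lam '' {X : A | lam X ∈ τ}) : Set L) = τ := by
    intro τ ⟨⟨t, ht⟩, hsub, hface⟩
    have h0 : (0 : L) ∈ τ := by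
      have := (hface t (hsub ht) 0 hE0).mp (by simpa using ht)
      exact this.2
    have hsum : ∀ a ∈ τ, ∀ b ∈ τ, a + b ∈ τ := fun a ha b hb =>
      (hface a (hsub ha) b (hsub hb)).mpr ⟨ha, hb⟩
    have hmono : ∀ (X Y : A) (f : X ⟶ Y), Mono f → lam Y ∈ τ → lam X ∈ τ := by
      intro X Y f hf hY
      have hse : (ShortComplex.mk f (Limits.cokernel.π f)
          (Limits.cokernel.condition f)).ShortExact :=
        ShortComplex.ShortExact.mk'
          (ShortComplex.exact_of_g_is_cokernel _ (Limits.cokernelIsCokernel f))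
          hf inferInstance
      have := hadd _ hse
      exact ((hface _ (hmem X) _ (hmem _)).mp (this ▸ hY)).1
    have hepi : ∀ (X Y : A) (f : X ⟶ Y), Epi f → lam X ∈ τ → lam Y ∈ τ := by
      intro X Y f hf hX
      have hse : (ShortComplex.mk (Limits.kernel.ι f) f
          (Limits.kernel.condition f)).ShortExact :=
        ShortComplex.ShortExact.mk'
          (ShortComplex.exact_of_f_is_kernel _ (Limits.kernelIsKernel f))
          inferInstance hf
      have := hadd _ hse
      exact ((hface _ (hmem _) _ (hmem Y)).mp (this ▸ hX)).2
    refine ⟨hmono, hepi, ?_, ?_⟩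
    · intro S hS h1 h3
      rw [hadd S hS]; exact hsum _ h1 _ h3
    · -- τ as an AddSubmonoid
      set M : AddSubmonoid L :=
        { carrier := τ
          add_mem' := fun {a b} ha hb => hsum a ha b hb
          zero_mem' := h0 }
      apply le_antisymm
      · refine AddSubmonoid.closure_le (S := M) |>.mpr ?_
        rintro x ⟨X, hX, rfl⟩
        exact hX
      · intro x hx
        have hxE : x ∈ E := hsub hx
        rw [hE] at hxE
        revert hx
        refine AddSubmonoid.closure_induction
          (motive := fun y _ => y ∈ τ →
            y ∈ (AddSubmonoid.closure (lam '' {X : A | lam X ∈ τ}) : Set L))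
          ?_ ?_ ?_ hxE
        · rintro y ⟨X, rfl⟩ hy
          exact AddSubmonoid.subset_closure ⟨X, hy, rfl⟩
        · intro _; exact zero_mem _
        · intro a b haE hbE iha ihb hab
          have : a ∈ τ ∧ b ∈ τ := (hface a (by rwa [hE]) b (by rwa [hE])).mp hab
          exact add_mem (iha this.1) (ihb this.2)
  refine ⟨key, ?_⟩
  intro τ τ' hτ hτ' hset
  have h1 := (key τ hτ).2.2.2
  have h2 := (key τ' hτ').2.2.2
  rw [← h1, ← h2, hset]
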